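/- Every chain complex over a field k is isomorphic to a product (equivalently direct sum in each degree) of sphere complexes S^n(V_n) and disk complexes D^n(W_n), where V_n = H_n(X) and W_n = B_{n-1}(X). -/

import Mathlib

open CategoryTheory CategoryTheory.Limits

section Aux
variable {k : Type} [Field k]

noncomputable def retr {M : ModuleCat.{0} k} (p : Submodule k M) : M ⟶ ModuleCat.of k p :=
  ModuleCat.ofHom (p.subtype.exists_leftInverse_of_injective p.ker_subtype).choose

lemma retr_spec {M : ModuleCat k} (p : Submodule k M) (x : p) : retr p (x : M) = x := by
  have h := (p.subtype.exists_leftInverse_of_injective p.ker_subtype).choose_spec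
  exact DFunLike.congr_fun h x

noncomputable def sect {M N : ModuleCat k} (f : M ⟶ N) (hf : Function.Surjective f) : N ⟶ M :=
  ModuleCat.ofHom (f.hom.exists_rightInverse_of_surjective (LinearMap.range_eq_top.2 hf)).choose

lemma sect_spec {M N : ModuleCat k} (f : M ⟶ N) (hf : Function.Surjective f) (y : N) :
    f (sect f hf y) = y := by
  unfold sect
  generalize_proofs
  rename_i hp
  exact DFunLike.congr_fun hp.choose_spec y

noncomputable def mleft {M N : ModuleCat k} (f : M ⟶ N) (hf : Function.Injective f) : N ⟶ M :=
  ModuleCat.ofHom (f.hom.exists_leftInverse_of_injective (LinearMap.ker_eq_bot.2 hf)).choose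

lemma mleft_spec {M N : ModuleCat k} (f : M ⟶ N) (hf : Function.Injective f) (x : M) :
    mleft f hf (f x) = x := by
  have h := (f.hom.exists_leftInverse_of_injective (LinearMap.ker_eq_bot.2 hf)).choose_spec
  exact DFunLike.congr_fun h x

lemma iso_apply_eq_zero {M N : ModuleCat k} (e : M ≅ N) (x : M) (h : e.hom x = 0) : x = 0 := by
  have : (e.hom ≫ e.inv) x = x := by rw [e.hom_inv_id]; rfl
  rw [← this]
  show e.inv (e.hom x) = 0
  rw [h, map_zero]

end Aux

/-- The sphere chain complex `S^n(V)`: `V` concentrated in degree `n`. -/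
noncomputable def sphere {k : Type} [CommRing k] (V : ModuleCat k) (n : ℤ) :
    ChainComplex (ModuleCat k) ℤ :=
  (HomologicalComplex.single (ModuleCat k) (ComplexShape.down ℤ) n).obj V

/-- Degree-`i` component of the disk complex `D^n(V)`. -/
noncomputable def diskX {k : Type} [CommRing k] (V : ModuleCat k) (n i : ℤ) : ModuleCat k :=
  if i = n ∨ i = n - 1 then V else ModuleCat.of k PUnit

/-- The disk chain complex `D^n(V)`: `V` in degrees `n` and `n-1`, with identity
differential. -/
noncomputable def disk {k : Type} [CommRing k] (V : ModuleCat k) (n : ℤ) :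
    ChainComplex (ModuleCat k) ℤ where
  X i := diskX V n i
  d i j :=
    if h : i = n ∧ j = n - 1 then
      eqToHom (show diskX V n i = diskX V n j by
        rw [diskX, diskX, if_pos (Or.inl h.1), if_pos (Or.inr h.2)])
    else 0
  shape i j hij := by
    rw [dif_neg]
    rintro ⟨h1, h2⟩
    exact hij (by simp only [ComplexShape.down_Rel]; omega)
  d_comp_d' i j l _ _ := by
    by_cases h : i = n ∧ j = n - 1
    · rw [dif_neg (by omega : ¬ (j = n ∧ l = n - 1))]
      simp
    · rw [dif_neg h]
      simp

/-- The canonical projection `D^n(V) ⟶ S^n(V)`, the identity in degree `n`. -/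
noncomputable def diskToSphere {k : Type} [CommRing k] (V : ModuleCat k) (n : ℤ) :
    disk V n ⟶ sphere V n :=
  HomologicalComplex.mkHomToSingle
    (eqToHom (show (disk V n).X n = V by
      simp [disk, diskX]))
    (fun i hi => by
      have : ¬ (i = n ∧ n = n - 1) := by omega
      simp only [disk, dif_neg this, zero_comp]; rfl)

/-- The canonical inclusion `S^n(V) ⟶ D^{n+1}(V)`, the identity in degree `n`. -/
noncomputable def sphereToDisk {k : Type} [CommRing k] (V : ModuleCat k) (n : ℤ) :
    sphere V n ⟶ disk V (n + 1) :=
  HomologicalComplex.mkHomFromSingle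
    (eqToHom (show V = (disk V (n+1)).X n by
      simp [disk, diskX]))
    (fun j hj => by
      have : ¬ (n = n + 1 ∧ j = n + 1 - 1) := by omega
      simp only [disk, dif_neg this, comp_zero]; rfl)

section Data
variable {k : Type} [Field k] (X : ChainComplex (ModuleCat.{0} k) ℤ)

/-- the boundaries `B_{n-1} = range (d n (n-1))` -/
noncomputable abbrev Bn (n : ℤ) : ModuleCat k :=
  ModuleCat.of k (LinearMap.range (X.d n (n - 1)).hom)

/-- inclusion of boundaries -/
noncomputable def subB (n : ℤ) : Bn X n ⟶ X.X (n - 1) :=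
  ModuleCat.ofHom (LinearMap.range (X.d n (n - 1)).hom).subtype

/-- corestriction of the differential onto boundaries -/
noncomputable def rrB (n : ℤ) : X.X n ⟶ Bn X n := ModuleCat.ofHom (X.d n (n - 1)).hom.rangeRestrict

lemma rrB_subB (n : ℤ) : rrB X n ≫ subB X n = X.d n (n - 1) := by ext x; rfl

instance epi_rrB (n : ℤ) : Epi (rrB X n) :=
  (ModuleCat.epi_iff_surjective _).2 (X.d n (n - 1)).hom.surjective_rangeRestrict

noncomputable def rMap (n : ℤ) : X.X (n - 1) ⟶ Bn X n :=
  retr (LinearMap.range (X.d n (n - 1)).hom)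

lemma rMap_spec (n : ℤ) (x : LinearMap.range (X.d n (n - 1)).hom) :
    rMap X n (x : X.X (n - 1)) = x := retr_spec _ x

noncomputable def sMap (n : ℤ) : X.X n ⟶ X.cycles n :=
  mleft (X.iCycles n) ((ModuleCat.mono_iff_injective _).1 inferInstance)

lemma sMap_iCycles (n : ℤ) (w : X.cycles n) : sMap X n (X.iCycles n w) = w :=
  mleft_spec _ _ w

lemma iCycles_sMap (n : ℤ) : X.iCycles n ≫ sMap X n = 𝟙 _ := by
  ext w
  exact sMap_iCycles X n w

noncomputable def phi (n : ℤ) : X.X n ⟶ X.homology n := sMap X n ≫ X.homologyπ n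

lemma d_phi (m n : ℤ) : X.d m n ≫ phi X n = 0 := by
  rw [phi, ← X.toCycles_i m n, Category.assoc, ← Category.assoc (X.iCycles n),
    iCycles_sMap, Category.id_comp, HomologicalComplex.toCycles_comp_homologyπ]

noncomputable def psi (n : ℤ) : X.X n ⟶ Bn X n := rrB X n

lemma psi_surjective (n : ℤ) : Function.Surjective (psi X n) :=
  (X.d n (n - 1)).hom.surjective_rangeRestrict

lemma subtype_psi_apply (n : ℤ) (x : X.X n) : (psi X n x).1 = X.d n (n - 1) x := rfl

noncomputable def rho (n : ℤ) : X.X n ⟶ Bn X (n + 1) :=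
  (X.XIsoOfEq (show n = n + 1 - 1 by omega)).hom ≫ rMap X (n + 1)

noncomputable def iot (n : ℤ) : Bn X (n + 1) ⟶ X.X n :=
  subB X (n + 1) ≫ (X.XIsoOfEq (show n + 1 - 1 = n by omega)).hom

lemma rr_iot (n : ℤ) : rrB X (n + 1) ≫ iot X n = X.d (n + 1) n := by
  rw [iot, ← Category.assoc, rrB_subB, HomologicalComplex.d_comp_XIsoOfEq_hom]

lemma iot_phi (n : ℤ) : iot X n ≫ phi X n = 0 := by
  rw [← cancel_epi (rrB X (n + 1)), ← Category.assoc, rr_iot, d_phi, comp_zero]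

lemma iot_psi (n : ℤ) : iot X n ≫ psi X n = 0 := by
  rw [← cancel_epi (rrB X (n + 1)), ← Category.assoc, rr_iot, comp_zero]
  ext x
  show X.d n (n - 1) (X.d (n + 1) n x) = (0 : Bn X n).1
  have := ConcreteCategory.congr_hom (X.d_comp_d (n + 1) n (n - 1)) x
  exact this

lemma iot_rho (n : ℤ) : iot X n ≫ rho X n = 𝟙 _ := by
  rw [iot, rho]
  simp only [Category.assoc]
  slice_lhs 2 3 => rw [HomologicalComplex.XIsoOfEq_hom_comp_XIsoOfEq_hom]
  rw [HomologicalComplex.XIsoOfEq_rfl]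
  simp only [Iso.refl_hom, Category.id_comp]
  ext x
  exact congrArg Subtype.val (rMap_spec X (n + 1) x)

noncomputable def sigma0 (n : ℤ) : X.homology n ⟶ X.X n :=
  sect (X.homologyπ n) ((ModuleCat.epi_iff_surjective _).1 inferInstance) ≫ X.iCycles n

lemma sigma0_phi (n : ℤ) : sigma0 X n ≫ phi X n = 𝟙 _ := by
  ext h
  show phi X n (sigma0 X n h) = h
  show (X.homologyπ n) (sMap X n (X.iCycles n (sect (X.homologyπ n) _ h))) = h
  rw [sMap_iCycles, sect_spec]

lemma iCycles_psi (n : ℤ) : X.iCycles n ≫ psi X n = 0 := by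
  ext w
  show X.d n (n - 1) (X.iCycles n w) = (0 : Bn X n).1
  exact ConcreteCategory.congr_hom (X.iCycles_d n (n - 1)) w

lemma sigma0_psi (n : ℤ) : sigma0 X n ≫ psi X n = 0 := by
  rw [sigma0, Category.assoc, iCycles_psi, comp_zero]

noncomputable def sigma (n : ℤ) : X.homology n ⟶ X.X n :=
  sigma0 X n - sigma0 X n ≫ rho X n ≫ iot X n

lemma sigma_phi (n : ℤ) : sigma X n ≫ phi X n = 𝟙 _ := by
  simp only [sigma, Preadditive.sub_comp, Category.assoc, iot_phi, comp_zero, sub_zero,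
    sigma0_phi]

lemma sigma_psi (n : ℤ) : sigma X n ≫ psi X n = 0 := by
  simp only [sigma, Preadditive.sub_comp, Category.assoc, iot_psi, comp_zero, sub_zero,
    sigma0_psi]

lemma sigma_rho (n : ℤ) : sigma X n ≫ rho X n = 0 := by
  simp only [sigma, Preadditive.sub_comp, Category.assoc, iot_rho, Category.comp_id, sub_self]

noncomputable def tau1 (n : ℤ) : Bn X n ⟶ X.X n :=
  sect (psi X n) (psi_surjective X n) -
    sect (psi X n) (psi_surjective X n) ≫ rho X n ≫ iot X n

lemma sect_psi (n : ℤ) : sect (psi X n) (psi_surjective X n) ≫ psi X n = 𝟙 _ := by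
  ext b
  exact congrArg Subtype.val (sect_spec (psi X n) (psi_surjective X n) b)

lemma tau1_psi (n : ℤ) : tau1 X n ≫ psi X n = 𝟙 _ := by
  simp only [tau1, Preadditive.sub_comp, Category.assoc, iot_psi, comp_zero, sub_zero, sect_psi]

lemma tau1_rho (n : ℤ) : tau1 X n ≫ rho X n = 0 := by
  simp only [tau1, Preadditive.sub_comp, Category.assoc, iot_rho, Category.comp_id, sub_self]

noncomputable def tau (n : ℤ) : Bn X n ⟶ X.X n :=
  tau1 X n - tau1 X n ≫ phi X n ≫ sigma X n

lemma tau_phi (n : ℤ) : tau X n ≫ phi X n = 0 := by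
  simp only [tau, Preadditive.sub_comp, Category.assoc, sigma_phi, Category.comp_id, sub_self]

lemma tau_psi (n : ℤ) : tau X n ≫ psi X n = 𝟙 _ := by
  simp only [tau, Preadditive.sub_comp, Category.assoc, sigma_psi, comp_zero, sub_zero, tau1_psi]

lemma tau_rho (n : ℤ) : tau X n ≫ rho X n = 0 := by
  simp only [tau, Preadditive.sub_comp, Category.assoc, sigma_rho, comp_zero, sub_zero, tau1_rho]

lemma iot_apply_mem (n : ℤ) (b : Bn X (n + 1)) :
    iot X n b = (X.XIsoOfEq (show n + 1 - 1 = n by omega)).hom b.1 := rfl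

/-- joint injectivity of the three coordinates -/
lemma coords_injective (n : ℤ) (x : X.X n)
    (h1 : phi X n x = 0) (h2 : psi X n x = 0) (h3 : rho X n x = 0) : x = 0 := by
  -- x is a cycle
  have hd : X.d n (n - 1) x = 0 := by
    have := congrArg Subtype.val h2
    exact this
  -- lift x to cycles
  set L : ModuleCat.of k k ⟶ X.X n :=
    ModuleCat.ofHom (LinearMap.toSpanSingleton k (X.X n) x) with hL
  have hc : L ≫ X.d n (n - 1) = 0 := by
    apply ModuleCat.hom_ext
    apply LinearMap.ext_ring
    show X.d n (n - 1) (LinearMap.toSpanSingleton k (X.X n) x 1) = 0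
    rw [LinearMap.toSpanSingleton_apply_one, hd]
  set w : X.cycles n := X.liftCycles L (n - 1) (by simp) hc (1 : k) with hw
  have hwx : X.iCycles n w = x := by
    have h6 := ConcreteCategory.congr_hom (X.liftCycles_i L (n - 1) (by simp) hc) (1 : k)
    exact h6.trans (LinearMap.toSpanSingleton_apply_one k (X.X n) x)
  -- phi x = π w = 0
  have hπ : X.homologyπ n w = 0 := by
    have : phi X n x = X.homologyπ n w := by
      rw [← hwx]
      show X.homologyπ n (sMap X n (X.iCycles n w)) = _
      rw [sMap_iCycles]
    rw [← this, h1]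
  -- exactness: w is a boundary
  have hex : (ShortComplex.mk (X.toCycles (n + 1) n) (X.homologyπ n)
      (X.toCycles_comp_homologyπ (n + 1) n)).Exact := by
    apply ShortComplex.exact_of_g_is_cokernel
    exact X.homologyIsCokernel (n + 1) n (by simp)
  obtain ⟨v, hv⟩ := (ShortComplex.moduleCat_exact_iff _).1 hex w hπ
  have hxv : x = X.d (n + 1) n v := by
    have h9 : X.iCycles n (X.toCycles (n + 1) n v) = X.d (n + 1) n v :=
      ConcreteCategory.congr_hom (X.toCycles_i (n + 1) n) v
    rw [← hwx, ← hv]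
    exact h9
  -- use rho x = 0
  have hx' : (X.XIsoOfEq (show n = n + 1 - 1 by omega)).hom x
      = X.d (n + 1) (n + 1 - 1) v := by
    rw [hxv]
    exact ConcreteCategory.congr_hom (X.d_comp_XIsoOfEq_hom (show n = n + 1 - 1 by omega) (n + 1)) v
  have hmem : (X.XIsoOfEq (show n = n + 1 - 1 by omega)).hom x
      ∈ LinearMap.range (X.d (n + 1) (n + 1 - 1)).hom := ⟨v, hx'.symm⟩
  have h4 : rho X n x = rMap X (n + 1) ((X.XIsoOfEq (show n = n + 1 - 1 by omega)).hom x) := rfl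
  rw [h4] at h3
  have := rMap_spec X (n + 1) ⟨_, hmem⟩
  rw [h3] at this
  have h5 : (X.XIsoOfEq (show n = n + 1 - 1 by omega)).hom x = 0 := by
    have := congrArg Subtype.val this.symm
    exact this
  exact iso_apply_eq_zero (X.XIsoOfEq (show n = n + 1 - 1 by omega)) x h5

/-- completeness of the decomposition -/
lemma decomposition (n : ℤ) :
    phi X n ≫ sigma X n + psi X n ≫ tau X n + rho X n ≫ iot X n = 𝟙 (X.X n) := by
  ext x
  show sigma X n (phi X n x) + tau X n (psi X n x) + iot X n (rho X n x) = x
  set y : X.X n := x - (sigma X n (phi X n x) + tau X n (psi X n x) + iot X n (rho X n x))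
    with hy
  have e1 : ∀ (W : ModuleCat k) (a b : X.X n) (g : X.X n ⟶ W), g (a - b) = g a - g b :=
    fun W a b g => map_sub g.hom a b
  have hyz : y = 0 := by
    apply coords_injective
    · rw [hy, map_sub]
      simp only [map_add]
      have c1 : phi X n (sigma X n (phi X n x)) = phi X n x :=
        ConcreteCategory.congr_hom (sigma_phi X n) (phi X n x)
      have c2 : phi X n (tau X n (psi X n x)) = 0 := by
        have := ConcreteCategory.congr_hom (tau_phi X n) (psi X n x)
        simpa using this
      have c3 : phi X n (iot X n (rho X n x)) = 0 := by
        have := ConcreteCategory.congr_hom (iot_phi X n) (rho X n x)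
        simpa using this
      rw [c1, c2, c3]; abel
    · rw [hy, map_sub]
      simp only [map_add]
      have c1 : psi X n (sigma X n (phi X n x)) = 0 := by
        have := ConcreteCategory.congr_hom (sigma_psi X n) (phi X n x); simpa using this
      have c2 : psi X n (tau X n (psi X n x)) = psi X n x :=
        ConcreteCategory.congr_hom (tau_psi X n) (psi X n x)
      have c3 : psi X n (iot X n (rho X n x)) = 0 := by
        have := ConcreteCategory.congr_hom (iot_psi X n) (rho X n x); simpa using this
      rw [c1, c2, c3]; abel
    · rw [hy, map_sub]
      simp only [map_add]
      have c1 : rho X n (sigma X n (phi X n x)) = 0 := by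
        have := ConcreteCategory.congr_hom (sigma_rho X n) (phi X n x); simpa using this
      have c2 : rho X n (tau X n (psi X n x)) = 0 := by
        have := ConcreteCategory.congr_hom (tau_rho X n) (psi X n x); simpa using this
      have c3 : rho X n (iot X n (rho X n x)) = rho X n x :=
        ConcreteCategory.congr_hom (iot_rho X n) (rho X n x)
      rw [c1, c2, c3]; abel
  have h8 := sub_eq_zero.1 hyz
  exact h8.symm

/-- map to the sphere complex -/
noncomputable def alphaMap (n : ℤ) : X ⟶ sphere (X.homology n) n :=
  HomologicalComplex.mkHomToSingle (phi X n) (fun i _ => d_phi X i n)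

lemma diskX_eq {V : ModuleCat k} {n i : ℤ} (h : i = n ∨ i = n - 1) : diskX V n i = V := by
  rw [diskX, if_pos h]

instance mono_subB (n : ℤ) : Mono (subB X n) :=
  (ModuleCat.mono_iff_injective _).2 (Submodule.injective_subtype _)

lemma d_psi (m n : ℤ) : X.d m n ≫ psi X n = 0 := by
  rw [← cancel_mono (subB X n), Category.assoc, psi, rrB_subB, X.d_comp_d, zero_comp]

lemma d_rMap (n : ℤ) : X.d n (n - 1) ≫ rMap X n = psi X n := by
  ext x
  exact congrArg Subtype.val (rMap_spec X n ⟨X.d n (n - 1) x, ⟨x, rfl⟩⟩)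

/-- map to the disk complex -/
noncomputable def betaMap (n : ℤ) : X ⟶ disk (Bn X n) n where
  f j :=
    if h : j = n then
      (X.XIsoOfEq h).hom ≫ psi X n ≫
        eqToHom (show (disk (Bn X n) n).X j = Bn X n from diskX_eq (Or.inl h)).symm
    else if h' : j = n - 1 then
      (X.XIsoOfEq h').hom ≫ rMap X n ≫
        eqToHom (show (disk (Bn X n) n).X j = Bn X n from diskX_eq (Or.inr h')).symm
    else 0
  comm' i j hij := by
    have hij' : j + 1 = i := hij
    by_cases h : j = n - 1
    · have hi : i = n := by omega
      rw [dif_neg (show ¬ j = n by omega), dif_pos h, dif_pos hi]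
      have hd : (disk (Bn X n) n).d i j =
          eqToHom (show diskX (Bn X n) n i = diskX (Bn X n) n j by
            rw [diskX, diskX, if_pos (Or.inl hi), if_pos (Or.inr h)]) := by
        dsimp only [disk]
        rw [dif_pos (show i = n ∧ j = n - 1 from ⟨hi, h⟩)]
      rw [hd]
      subst hi
      subst h
      simp only [HomologicalComplex.XIsoOfEq_rfl, Iso.refl_hom, Category.id_comp,
        Category.assoc, eqToHom_trans, ← d_rMap]
      exact (Category.assoc _ _ _).trans (congrArg (X.d i (i - 1) ≫ ·)
        ((Category.assoc _ _ _).trans (congrArg (rMap X i ≫ ·) (eqToHom_trans _ _))))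
    · by_cases h2 : j = n
      · rw [dif_pos h2, dif_neg (show ¬ i = n by omega), dif_neg (show ¬ i = n - 1 by omega),
          zero_comp]
        subst h2
        rw [← Category.assoc, HomologicalComplex.d_comp_XIsoOfEq_hom, ← Category.assoc,
          d_psi, zero_comp]
      · rw [dif_neg h2, dif_neg h, comp_zero]
        have hd0 : (disk (Bn X n) n).d i j = 0 := by
          dsimp only [disk]
          rw [dif_neg (fun hc => h hc.2)]
          rfl
        rw [hd0, comp_zero]

lemma alphaMap_f (n : ℤ) : (alphaMap X n).f n
    = phi X n ≫
      (HomologicalComplex.singleObjXSelf (ComplexShape.down ℤ) n (X.homology n)).inv :=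
  HomologicalComplex.mkHomToSingle_f _ _

lemma betaMap_f_self (n : ℤ) : (betaMap X n).f n
    = psi X n ≫
      eqToHom (show (disk (Bn X n) n).X n = Bn X n from diskX_eq (Or.inl rfl)).symm := by
  dsimp only [betaMap]
  rw [dif_pos rfl]
  simp only [HomologicalComplex.XIsoOfEq_rfl, Iso.refl_hom, Category.id_comp]

lemma betaMap_f_pred (n : ℤ) : (betaMap X (n + 1)).f n
    = rho X n ≫
      eqToHom (show (disk (Bn X (n + 1)) (n + 1)).X n = Bn X (n + 1) from
        diskX_eq (Or.inr (by omega))).symm := by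
  dsimp only [betaMap]
  rw [dif_neg (show ¬ n = n + 1 by omega), dif_pos (show n = n + 1 - 1 by omega), rho]
  simp only [Category.assoc]

end Data


section ProdTrunc
variable {C : Type*} [Category C] [HasZeroMorphisms C]

lemma isIso_prod_proj_pair (G : ℤ → C) [HasProduct G] (i : ℤ)
    [HasBinaryBiproduct (G i) (G (i + 1))]
    (hz : ∀ n, n ≠ i → n ≠ i + 1 → IsZero (G n)) :
    IsIso (biprod.lift (Pi.π G i) (Pi.π G (i + 1))) := by
  refine ⟨⟨Pi.lift (fun n =>
    if h : n = i then biprod.fst ≫ eqToHom (congrArg G h.symm)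
    else if h' : n = i + 1 then biprod.snd ≫ eqToHom (congrArg G h'.symm)
    else 0), ?_, ?_⟩⟩
  · apply Pi.hom_ext
    intro n
    simp only [Category.assoc, limit.lift_π, Fan.mk_π_app, Category.id_comp]
    by_cases h : n = i
    · subst h
      rw [dif_pos rfl, eqToHom_refl, Category.comp_id, biprod.lift_fst]
    · by_cases h' : n = i + 1
      · subst h'
        rw [dif_neg h, dif_pos rfl, eqToHom_refl, Category.comp_id, biprod.lift_snd]
      · rw [dif_neg h, dif_neg h', comp_zero]
        exact ((hz n h h').eq_of_tgt _ _)
  · apply biprod.hom_ext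
    · rw [Category.assoc, biprod.lift_fst, limit.lift_π, Category.id_comp]
      show (if h : i = i then biprod.fst ≫ eqToHom (congrArg G h.symm)
        else if h' : i = i + 1 then biprod.snd ≫ eqToHom (congrArg G h'.symm) else 0) = _
      rw [dif_pos rfl, eqToHom_refl, Category.comp_id]
    · rw [Category.assoc, biprod.lift_snd, limit.lift_π, Category.id_comp]
      show (if h : i + 1 = i then biprod.fst ≫ eqToHom (congrArg G h.symm)
        else if h' : i + 1 = i + 1 then biprod.snd ≫ eqToHom (congrArg G h'.symm) else 0) = _
      rw [dif_neg (by omega), dif_pos rfl, eqToHom_refl, Category.comp_id]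

end ProdTrunc

/-- Over a field, every chain complex is isomorphic to a product of spheres and disks,
with `V_n = H_n(X)` and `W_n = B_{n-1}(X) = im(d_n)`. -/
theorem chainComplex_iso_prod_spheres_disks (k : Type) [Field k]
    (X : ChainComplex (ModuleCat k) ℤ) :
    Nonempty (X ≅ ∏ᶜ (fun n : ℤ =>
      (sphere (X.homology n) n) ⊞
        (disk (ModuleCat.of k (LinearMap.range (X.d n (n - 1)).hom)) n))) := by
  classical
  set F : ℤ → ChainComplex (ModuleCat k) ℤ := fun n =>
    (sphere (X.homology n) n) ⊞
      (disk (ModuleCat.of k (LinearMap.range (X.d n (n - 1)).hom)) n) with hF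
  set f : X ⟶ ∏ᶜ F := Pi.lift (fun n => biprod.lift (alphaMap X n) (betaMap X n)) with hf
  suffices h : ∀ i : ℤ, IsIso (f.f i) by
    haveI := h
    haveI : IsIso f := HomologicalComplex.Hom.isIso_of_components f
    exact ⟨asIso f⟩
  intro i
  set ev := HomologicalComplex.eval (ModuleCat k) (ComplexShape.down ℤ) i with hev
  haveI : PreservesBinaryBiproducts ev :=
    preservesBinaryBiproducts_of_preservesBinaryProducts _
  -- zero objects
  have hzS : ∀ n : ℤ, i ≠ n → IsZero ((sphere (X.homology n) n).X i) := fun n hn =>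
    HomologicalComplex.isZero_single_obj_X (ComplexShape.down ℤ) n _ i hn
  have hzD : ∀ (V : ModuleCat k) (n : ℤ), ¬ (i = n ∨ i = n - 1) →
      IsZero ((disk V n).X i) := by
    intro V n hn
    have e : (disk V n).X i = ModuleCat.of k PUnit := by
      dsimp only [disk, diskX]
      rw [if_neg hn]
    rw [e]
    exact ModuleCat.isZero_of_subsingleton _
  have hzF : ∀ n : ℤ, n ≠ i → n ≠ i + 1 → IsZero (ev.obj (F n)) := by
    intro n h1 h2
    refine IsZero.of_iso ?_ (ev.mapBiprod (sphere (X.homology n) n)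
      (disk (ModuleCat.of k (LinearMap.range (X.d n (n - 1)).hom)) n))
    rw [biprod_isZero_iff]
    exact ⟨hzS n (fun h => h1 h.symm), hzD _ n (by omega)⟩
  -- comparison maps
  set pc : (∏ᶜ F).X i ⟶ ∏ᶜ (fun n => ev.obj (F n)) := piComparison ev F with hpc
  haveI : IsIso pc := (inferInstance : IsIso (piComparison ev F))
  set q := biprod.lift (Pi.π (fun n => ev.obj (F n)) i) (Pi.π (fun n => ev.obj (F n)) (i + 1))
    with hq
  haveI : IsIso q := isIso_prod_proj_pair _ i hzF
  set t : X.X i ⟶ ev.obj (F i) ⊞ ev.obj (F (i + 1)) := f.f i ≫ pc ≫ q with ht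
  -- isomorphisms identifying the pieces
  set e1 := ev.mapBiprod (sphere (X.homology i) i)
    (disk (ModuleCat.of k (LinearMap.range (X.d i (i - 1)).hom)) i) with he1
  set e2 := ev.mapBiprod (sphere (X.homology (i + 1)) (i + 1))
    (disk (ModuleCat.of k (LinearMap.range (X.d (i + 1) (i + 1 - 1)).hom)) (i + 1)) with he2
  set sIso := HomologicalComplex.singleObjXSelf (ComplexShape.down ℤ) i (X.homology i)
    with hsIso
  have eD1 : (disk (Bn X i) i).X i = Bn X i := diskX_eq (Or.inl rfl)
  have eD2 : (disk (Bn X (i + 1)) (i + 1)).X i = Bn X (i + 1) :=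
    diskX_eq (Or.inr (by omega))
  set c1 : ev.obj (F i) ⊞ ev.obj (F (i + 1)) ⟶ X.homology i :=
    biprod.fst ≫ e1.hom ≫ biprod.fst ≫ sIso.hom with hc1
  set c2 : ev.obj (F i) ⊞ ev.obj (F (i + 1)) ⟶ Bn X i :=
    biprod.fst ≫ e1.hom ≫ biprod.snd ≫ eqToHom eD1 with hc2
  set c3 : ev.obj (F i) ⊞ ev.obj (F (i + 1)) ⟶ Bn X (i + 1) :=
    biprod.snd ≫ e2.hom ≫ biprod.snd ≫ eqToHom eD2 with hc3
  -- components of t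
  have hfπ : ∀ n : ℤ, f.f i ≫ pc ≫ Pi.π (fun n => ev.obj (F n)) n
      = (biprod.lift (alphaMap X n) (betaMap X n)).f i := by
    intro n
    refine (congrArg (fun g => f.f i ≫ g) (piComparison_comp_π ev F n)).trans ?_
    have : f ≫ Pi.π F n = biprod.lift (alphaMap X n) (betaMap X n) := by
      rw [hf, limit.lift_π]
      rfl
    have h2 : f.f i ≫ (Pi.π F n).f i = (biprod.lift (alphaMap X n) (betaMap X n)).f i := by
      rw [← HomologicalComplex.comp_f, this]
    exact h2
  have hA1 : (biprod.lift (alphaMap X i) (betaMap X i)).f i ≫ ev.map biprod.fst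
      = (alphaMap X i).f i := by
    exact congrArg (fun g => HomologicalComplex.Hom.f g i) (biprod.lift_fst (alphaMap X i) (betaMap X i))
  have hA2 : (biprod.lift (alphaMap X i) (betaMap X i)).f i ≫ ev.map biprod.snd
      = (betaMap X i).f i := by
    exact congrArg (fun g => HomologicalComplex.Hom.f g i) (biprod.lift_snd (alphaMap X i) (betaMap X i))
  have hA3 : (biprod.lift (alphaMap X (i + 1)) (betaMap X (i + 1))).f i ≫ ev.map biprod.snd
      = (betaMap X (i + 1)).f i := by
    exact congrArg (fun g => HomologicalComplex.Hom.f g i)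
      (biprod.lift_snd (alphaMap X (i + 1)) (betaMap X (i + 1)))
  have he1f : e1.hom ≫ biprod.fst = ev.map biprod.fst := by
    rw [he1, Functor.mapBiprod_hom, biprod.lift_fst]
  have he1s : e1.hom ≫ biprod.snd = ev.map biprod.snd := by
    rw [he1, Functor.mapBiprod_hom, biprod.lift_snd]
  have he2s : e2.hom ≫ biprod.snd = ev.map biprod.snd := by
    rw [he2, Functor.mapBiprod_hom, biprod.lift_snd]
  have ht1 : t ≫ c1 = phi X i := by
    rw [ht, hc1]
    simp only [Category.assoc]
    slice_lhs 3 4 => rw [biprod.lift_fst]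
    slice_lhs 1 3 => rw [hfπ i]
    have hsub : (biprod.lift (alphaMap X i) (betaMap X i)).f i ≫ e1.hom ≫ biprod.fst
        = (alphaMap X i).f i :=
      (congrArg ((biprod.lift (alphaMap X i) (betaMap X i)).f i ≫ ·) he1f).trans hA1
    have h3 : (alphaMap X i).f i ≫ sIso.hom = phi X i := by
      exact (congrArg (· ≫ sIso.hom) (alphaMap_f X i)).trans ((Category.assoc _ _ _).trans
        ((congrArg (phi X i ≫ ·) sIso.inv_hom_id).trans (Category.comp_id _)))
    exact (congrArg (· ≫ sIso.hom) hsub).trans h3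
  have ht2 : t ≫ c2 = psi X i := by
    rw [ht, hc2]
    simp only [Category.assoc]
    slice_lhs 3 4 => rw [biprod.lift_fst]
    slice_lhs 1 3 => rw [hfπ i]
    have hsub : (biprod.lift (alphaMap X i) (betaMap X i)).f i ≫ e1.hom ≫ biprod.snd
        = (betaMap X i).f i :=
      (congrArg ((biprod.lift (alphaMap X i) (betaMap X i)).f i ≫ ·) he1s).trans hA2
    have h3 : (betaMap X i).f i ≫ eqToHom eD1 = psi X i := by
      exact (congrArg (· ≫ eqToHom eD1) (betaMap_f_self X i)).trans ((Category.assoc _ _ _).trans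
        ((congrArg (psi X i ≫ ·) ((eqToHom_trans _ _).trans (eqToHom_refl _ _))).trans
          (Category.comp_id _)))
    exact (congrArg (· ≫ eqToHom eD1) hsub).trans h3
  have ht3 : t ≫ c3 = rho X i := by
    rw [ht, hc3]
    simp only [Category.assoc]
    slice_lhs 3 4 => rw [biprod.lift_snd]
    slice_lhs 1 3 => rw [hfπ (i + 1)]
    have hsub : (biprod.lift (alphaMap X (i + 1)) (betaMap X (i + 1))).f i ≫ e2.hom ≫ biprod.snd
        = (betaMap X (i + 1)).f i :=
      (congrArg ((biprod.lift (alphaMap X (i + 1)) (betaMap X (i + 1))).f i ≫ ·) he2s).trans hA3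
    have h3 : (betaMap X (i + 1)).f i ≫ eqToHom eD2 = rho X i := by
      exact (congrArg (· ≫ eqToHom eD2) (betaMap_f_pred X i)).trans ((Category.assoc _ _ _).trans
        ((congrArg (rho X i ≫ ·) ((eqToHom_trans _ _).trans (eqToHom_refl _ _))).trans
          (Category.comp_id _)))
    exact (congrArg (· ≫ eqToHom eD2) hsub).trans h3
  -- joint monomorphism property of the coordinates
  have hext : ∀ {W : ModuleCat k} (g1 g2 : W ⟶ ev.obj (F i) ⊞ ev.obj (F (i + 1))),
      g1 ≫ c1 = g2 ≫ c1 → g1 ≫ c2 = g2 ≫ c2 → g1 ≫ c3 = g2 ≫ c3 → g1 = g2 := by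
    intro W g1 g2 k1 k2 k3
    rw [hc1] at k1
    rw [hc2] at k2
    rw [hc3] at k3
    apply biprod.hom_ext
    · rw [← cancel_mono e1.hom]
      apply biprod.hom_ext
      · refine (cancel_mono sIso.hom).1 ?_
        simp only [Category.assoc]
        exact k1
      · refine (cancel_mono (eqToHom eD1)).1 ?_
        simp only [Category.assoc]
        exact k2
    · rw [← cancel_mono e2.hom]
      apply biprod.hom_ext
      · exact (hzS (i + 1) (by omega)).eq_of_tgt _ _
      · refine (cancel_mono (eqToHom eD2)).1 ?_
        simp only [Category.assoc]
        exact k3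
  -- the inverse
  set u : ev.obj (F i) ⊞ ev.obj (F (i + 1)) ⟶ X.X i :=
    c1 ≫ sigma X i + c2 ≫ tau X i + c3 ≫ iot X i with hu
  have htu : t ≫ u = 𝟙 (X.X i) := by
    rw [hu]
    simp only [Preadditive.comp_add, ← Category.assoc, ht1, ht2, ht3]
    exact decomposition X i
  have hut : u ≫ t = 𝟙 _ := by
    apply hext
    · rw [Category.assoc, ht1, Category.id_comp, hu]
      simp only [Preadditive.add_comp, Category.assoc, sigma_phi, tau_phi, iot_phi,
        comp_zero, add_zero, Category.comp_id]
    · rw [Category.assoc, ht2, Category.id_comp, hu]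
      simp only [Preadditive.add_comp, Category.assoc, sigma_psi, tau_psi, iot_psi,
        comp_zero, zero_add, add_zero, Category.comp_id]
    · rw [Category.assoc, ht3, Category.id_comp, hu]
      simp only [Preadditive.add_comp, Category.assoc, sigma_rho, tau_rho, iot_rho,
        comp_zero, zero_add, add_zero, Category.comp_id]
  haveI : IsIso t := ⟨⟨u, htu, hut⟩⟩
  have hfi : f.f i = t ≫ inv q ≫ inv pc := by
    rw [ht]
    simp only [Category.assoc, IsIso.hom_inv_id, Category.comp_id, IsIso.hom_inv_id_assoc]
  rw [hfi]
  infer_instance
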